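/- arXiv:2510.04538 — 2 statements merged into one kernel-verified Lean document; each statement's English description precedes it below -/
import Mathlib

section
/- Let f : [0,∞) → [0,∞) be continuous with a unique fixed point x̄. If f has no 2-cycle (i.e., f(f(x)) = x implies x = x̄) and x̄ is locally asymptotically stable in the sense that (f(x) - x)(x - x̄) < 0 for all x ≠ x̄, then every orbit of f converges to x̄. -/
open Set Filter Topology

private lemma subseq_tendsto_limsup {u : ℕ → ℝ} {C c : ℝ} (hC : ∀ n, u n ≤ C)
    (hc : ∀ n, c ≤ u n) :
    ∃ φ : ℕ → ℕ, StrictMono φ ∧ Tendsto (u ∘ φ) atTop (𝓝 (limsup u atTop)) := by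
  have hb : IsBoundedUnder (· ≤ ·) atTop u := isBoundedUnder_of ⟨C, hC⟩
  have hb' : IsBoundedUnder (· ≥ ·) atTop u := isBoundedUnder_of ⟨c, hc⟩
  set L := limsup u atTop with hL
  have hfreq : ∀ k : ℕ, ∃ᶠ n in atTop, |u n - L| < 1 / (k + 1) := by
    intro k
    have hpos : (0:ℝ) < 1 / (k+1) := by positivity
    have h1 : ∃ᶠ n in atTop, L - 1/(k+1) < u n :=
      frequently_lt_of_lt_limsup hb'.isCoboundedUnder_le (by linarith)
    have h2 : ∀ᶠ n in atTop, u n < L + 1/(k+1) :=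
      eventually_lt_of_limsup_lt (by linarith) hb
    refine (h1.and_eventually h2).mono ?_
    rintro n ⟨hn1, hn2⟩
    rw [abs_lt]
    constructor <;> linarith
  obtain ⟨φ, hφ, hφ2⟩ := extraction_forall_of_frequently hfreq
  refine ⟨φ, hφ, ?_⟩
  rw [tendsto_iff_dist_tendsto_zero]
  refine squeeze_zero (fun n => dist_nonneg) (fun n => ?_)
    tendsto_one_div_add_atTop_nhds_zero_nat
  have := hφ2 n
  rw [Real.dist_eq]
  exact le_of_lt this

private lemma subseq_tendsto_liminf {u : ℕ → ℝ} {C c : ℝ} (hC : ∀ n, u n ≤ C)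
    (hc : ∀ n, c ≤ u n) :
    ∃ φ : ℕ → ℕ, StrictMono φ ∧ Tendsto (u ∘ φ) atTop (𝓝 (liminf u atTop)) := by
  have hb : IsBoundedUnder (· ≤ ·) atTop u := isBoundedUnder_of ⟨C, hC⟩
  have hb' : IsBoundedUnder (· ≥ ·) atTop u := isBoundedUnder_of ⟨c, hc⟩
  set L := liminf u atTop with hL
  have hfreq : ∀ k : ℕ, ∃ᶠ n in atTop, |u n - L| < 1 / (k + 1) := by
    intro k
    have hpos : (0:ℝ) < 1 / (k+1) := by positivity
    have h1 : ∃ᶠ n in atTop, u n < L + 1/(k+1) :=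
      frequently_lt_of_liminf_lt hb.isCoboundedUnder_ge (by linarith)
    have h2 : ∀ᶠ n in atTop, L - 1/(k+1) < u n :=
      eventually_lt_of_lt_liminf (by linarith) hb'
    refine (h1.and_eventually h2).mono ?_
    rintro n ⟨hn1, hn2⟩
    rw [abs_lt]
    constructor <;> linarith
  obtain ⟨φ, hφ, hφ2⟩ := extraction_forall_of_frequently hfreq
  refine ⟨φ, hφ, ?_⟩
  rw [tendsto_iff_dist_tendsto_zero]
  refine squeeze_zero (fun n => dist_nonneg) (fun n => ?_)
    tendsto_one_div_add_atTop_nhds_zero_nat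
  have := hφ2 n
  rw [Real.dist_eq]
  exact le_of_lt this

/-- A continuous self-map of `[0,∞)` with a unique fixed point `x̄`, no 2-cycle
(`f (f x) = x → x = x̄`), satisfying `(f x - x) * (x - x̄) < 0` for all `x ≠ x̄`,
has all orbits converging to `x̄`. -/
theorem stmt_0 (f : ℝ → ℝ) (hmap : MapsTo f (Ici 0) (Ici 0))
    (hcont : ContinuousOn f (Ici 0))
    (xbar : ℝ) (hxbar : xbar ∈ Ici 0) (hfix : f xbar = xbar)
    (huniq : ∀ x ∈ Ici 0, f x = x → x = xbar)
    (hno2 : ∀ x ∈ Ici 0, f (f x) = x → x = xbar)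
    (hstab : ∀ x ∈ Ici 0, x ≠ xbar → (f x - x) * (x - xbar) < 0) :
    ∀ x ∈ Ici 0, Tendsto (fun n => f^[n] x) atTop (𝓝 xbar) := by
  have hx0 : (0:ℝ) ≤ xbar := hxbar
  -- monotonicity consequences of stability
  have hdec : ∀ y : ℝ, 0 ≤ y → xbar < y → f y < y := by
    intro y h0 hlt
    nlinarith [hstab y h0 (ne_of_gt hlt)]
  have hinc : ∀ y : ℝ, 0 ≤ y → y < xbar → y < f y := by
    intro y h0 hlt
    nlinarith [hstab y h0 (ne_of_lt hlt)]
  -- continuity helper for sequences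
  have key : ∀ (u : ℕ → ℝ) (p : ℝ), (∀ n, 0 ≤ u n) → 0 ≤ p →
      Tendsto u atTop (𝓝 p) → Tendsto (fun n => f (u n)) atTop (𝓝 (f p)) := by
    intro u p hu hp h
    exact (hcont p hp).tendsto.comp
      (tendsto_nhdsWithin_of_tendsto_nhds_of_eventually_within u h (Eventually.of_forall hu))
  -- half sign condition for f ∘ f : below xbar, f (f y) > y
  have glt : ∀ y : ℝ, 0 ≤ y → y < xbar → y < f (f y) := by
    by_contra hcon
    push_neg at hcon
    obtain ⟨y₀, hy₀0, hy₀lt, hy₀⟩ := hcon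
    have hy₀' : f (f y₀) < y₀ :=
      lt_of_le_of_ne hy₀ fun h => absurd (hno2 y₀ hy₀0 h) (ne_of_lt hy₀lt)
    have hall : ∀ y : ℝ, 0 ≤ y → y < xbar → f (f y) < y := by
      intro y hy0 hylt
      by_contra hge
      push_neg at hge
      have hsub : uIcc y₀ y ⊆ Ici 0 := by
        intro t ht
        have h1 : min y₀ y ≤ t := ht.1
        have : (0:ℝ) ≤ min y₀ y := le_min hy₀0 hy0
        exact le_trans this h1
      have hcg : ContinuousOn (fun t => f (f t) - t) (uIcc y₀ y) := by
        have h1 : ContinuousOn (fun t => f (f t)) (Ici 0) := hcont.comp hcont hmap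
        exact ((h1.mono hsub).sub (continuousOn_id.mono hsub))
      have h0mem : (0:ℝ) ∈ uIcc (f (f y₀) - y₀) (f (f y) - y) := by
        rw [mem_uIcc]
        left
        constructor <;> linarith
      obtain ⟨t, ht, ht0⟩ := intermediate_value_uIcc hcg h0mem
      have ht0' : f (f t) = t := by
        have : f (f t) - t = 0 := ht0
        linarith
      have htmem : (0:ℝ) ≤ t := hsub ht
      have htlt : t < xbar := by
        have h2 : t ≤ max y₀ y := ht.2
        have : max y₀ y < xbar := max_lt hy₀lt hylt
        linarith
      exact absurd (hno2 t htmem ht0') (ne_of_lt htlt)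
    set z : ℕ → ℝ := fun n => (fun t => f (f t))^[n] y₀ with hzdef
    have hz0 : z 0 = y₀ := rfl
    have hzsucc : ∀ n, z (n+1) = f (f (z n)) := fun n =>
      Function.iterate_succ_apply' (fun t => f (f t)) n y₀
    have hzprop : ∀ n, 0 ≤ z n ∧ z n < xbar := by
      intro n
      induction n with
      | zero => exact ⟨hy₀0, hy₀lt⟩
      | succ n ih =>
        rw [hzsucc n]
        exact ⟨hmap (hmap ih.1), lt_trans (hall _ ih.1 ih.2) ih.2⟩
    have hdecz : ∀ n, z (n+1) < z n := by
      intro n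
      rw [hzsucc n]
      exact hall _ (hzprop n).1 (hzprop n).2
    have hanti : Antitone z := antitone_nat_of_succ_le fun n => (hdecz n).le
    have hbdd : BddBelow (range z) := by
      refine ⟨0, ?_⟩
      rintro _ ⟨n, rfl⟩
      exact (hzprop n).1
    have htend : Tendsto z atTop (𝓝 (⨅ n, z n)) := tendsto_atTop_ciInf hanti hbdd
    set L0 := ⨅ n, z n with hL0def
    have hL00 : 0 ≤ L0 := le_ciInf fun n => (hzprop n).1
    have h1 : Tendsto (fun n => f (f (z n))) atTop (𝓝 (f (f L0))) :=
      key (fun n => f (z n)) (f L0) (fun n => hmap (hzprop n).1) (hmap hL00)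
        (key z L0 (fun n => (hzprop n).1) hL00 htend)
    have h2 : Tendsto (fun n => f (f (z n))) atTop (𝓝 L0) := by
      have heq : (fun n => f (f (z n))) = fun n => z (n+1) :=
        funext fun n => (hzsucc n).symm
      rw [heq]
      exact htend.comp (tendsto_add_atTop_nat 1)
    have hfixL0 : f (f L0) = L0 := tendsto_nhds_unique h1 h2
    have hxeq : L0 = xbar := hno2 L0 hL00 hfixL0
    have hle : L0 ≤ z 0 := ciInf_le hbdd 0
    rw [hz0, hxeq] at hle
    linarith
  -- main argument
  intro x hx
  set a : ℕ → ℝ := fun n => f^[n] x with hadef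
  have hasucc : ∀ n, a (n+1) = f (a n) := fun n => Function.iterate_succ_apply' f n x
  have ha0 : ∀ n, 0 ≤ a n := by
    intro n
    induction n with
    | zero => exact hx
    | succ n ih => rw [hasucc n]; exact hmap ih
  -- bound on the orbit
  obtain ⟨m, hm, hmax⟩ := isCompact_Icc.exists_isMaxOn (nonempty_Icc.2 hx0)
    (hcont.mono (fun y (hy : y ∈ Icc (0:ℝ) xbar) => hy.1))
  set C := max x (f m) with hCdef
  have haC : ∀ n, a n ≤ C := by
    intro n
    induction n with
    | zero => exact le_max_left _ _
    | succ n ih =>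
      rw [hasucc n]
      rcases le_or_gt (a n) xbar with h | h
      · exact le_trans (hmax (⟨ha0 n, h⟩ : a n ∈ Icc (0:ℝ) xbar)) (le_max_right _ _)
      · exact le_trans (hdec (a n) (ha0 n) h).le ih
  have hbU : IsBoundedUnder (· ≤ ·) atTop a := isBoundedUnder_of ⟨C, haC⟩
  have hbL : IsBoundedUnder (· ≥ ·) atTop a := isBoundedUnder_of ⟨0, ha0⟩
  set L := limsup a atTop with hLdef
  set l := liminf a atTop with hldef
  have hlL : l ≤ L := liminf_le_limsup hbU hbL
  -- every subsequential limit of the orbit has a "predecessor" in the cluster set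
  have pred : ∀ c : ℝ, (∃ φ : ℕ → ℕ, StrictMono φ ∧ Tendsto (a ∘ φ) atTop (𝓝 c)) →
      ∃ p, 0 ≤ p ∧ f p = c ∧ l ≤ p ∧ p ≤ L := by
    rintro c ⟨φ, hφ, hφt⟩
    set v : ℕ → ℝ := fun k => a (φ (k+1) - 1) with hvdef
    have hvmem : ∀ k, v k ∈ Icc (0:ℝ) C := fun k => ⟨ha0 _, haC _⟩
    obtain ⟨p, hpmem, ψ, hψ, hψt⟩ :=
      tendsto_subseq_of_bounded (Metric.isBounded_Icc 0 C) hvmem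
    rw [isClosed_Icc.closure_eq] at hpmem
    have hp0 : (0:ℝ) ≤ p := hpmem.1
    have hfv : ∀ k, f (v (ψ k)) = a (φ (ψ k + 1)) := by
      intro k
      have h1 : ψ k + 1 ≤ φ (ψ k + 1) := hφ.le_apply
      have h2 : φ (ψ k + 1) - 1 + 1 = φ (ψ k + 1) := by omega
      show f (a (φ (ψ k + 1) - 1)) = a (φ (ψ k + 1))
      conv_rhs => rw [← h2]
      rw [hasucc]
    have h1 : Tendsto (fun k => f (v (ψ k))) atTop (𝓝 (f p)) :=
      key (fun k => v (ψ k)) p (fun k => (hvmem _).1) hp0 hψt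
    have hψ1 : Tendsto (fun k => ψ k + 1) atTop atTop := by
      refine tendsto_atTop_mono (fun k => ?_) tendsto_id
      have h2 : k ≤ ψ k := hψ.le_apply
      simp only [id_eq]
      omega
    have h2 : Tendsto (fun k => a (φ (ψ k + 1))) atTop (𝓝 c) := hφt.comp hψ1
    have hfp : f p = c := by
      refine tendsto_nhds_unique ?_ h2
      have heq : (fun k => f (v (ψ k))) = fun k => a (φ (ψ k + 1)) := funext hfv
      rw [← heq]
      exact h1
    have hidx : Tendsto (fun k => φ (ψ k + 1) - 1) atTop atTop := by
      refine tendsto_atTop_mono (fun k => ?_) tendsto_id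
      have h1 : ψ k + 1 ≤ φ (ψ k + 1) := hφ.le_apply
      have h2 : k ≤ ψ k := hψ.le_apply
      simp only [id_eq]
      omega
    have hlp : l ≤ p := by
      by_contra h
      push_neg at h
      have hev : ∀ᶠ n in atTop, (p + l)/2 < a n :=
        eventually_lt_of_lt_liminf (by rw [← hldef]; linarith) hbL
      have hev2 : ∀ᶠ k in atTop, (p + l)/2 < v (ψ k) := hidx.eventually hev
      have := ge_of_tendsto hψt (hev2.mono fun k hk => hk.le)
      linarith
    have hpL : p ≤ L := by
      by_contra h
      push_neg at h
      have hev : ∀ᶠ n in atTop, a n < (p + L)/2 :=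
        eventually_lt_of_limsup_lt (by rw [← hLdef]; linarith) hbU
      have hev2 : ∀ᶠ k in atTop, v (ψ k) < (p + L)/2 := hidx.eventually hev
      have := le_of_tendsto hψt (hev2.mono fun k hk => hk.le)
      linarith
    exact ⟨p, hp0, hfp, hlp, hpL⟩
  -- limsup ≤ xbar
  have hLle : L ≤ xbar := by
    by_contra h
    push_neg at h
    obtain ⟨φ, hφ, hφt⟩ := subseq_tendsto_limsup haC ha0
    obtain ⟨p, hp0, hfp, hlp, hpL⟩ := pred L ⟨φ, hφ, hφt⟩
    have hpx : p < xbar := by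
      rcases lt_trichotomy p xbar with h1 | h1 | h1
      · exact h1
      · exfalso; rw [h1, hfix] at hfp; linarith
      · exfalso; have := hdec p hp0 h1; rw [hfp] at this; linarith
    have hlx : l < xbar := lt_of_le_of_lt hlp hpx
    obtain ⟨φ', hφ', hφt'⟩ := subseq_tendsto_liminf haC ha0
    obtain ⟨q, hq0, hfq, hlq, hqL⟩ := pred l ⟨φ', hφ', hφt'⟩
    have hqx : xbar < q := by
      rcases lt_trichotomy q xbar with h1 | h1 | h1
      · exfalso; have := hinc q hq0 h1; rw [hfq] at this; linarith
      · exfalso; rw [h1, hfix] at hfq; linarith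
      · exact h1
    -- intermediate value: find s ∈ [p, xbar] with f s = q
    have hsub : Icc p xbar ⊆ Ici 0 := fun t ht => le_trans hp0 ht.1
    have hivt := intermediate_value_Icc' hpx.le (hcont.mono hsub)
    have hqmem : q ∈ Icc (f xbar) (f p) := by
      rw [hfix, hfp]
      exact ⟨hqx.le, hqL⟩
    obtain ⟨s, hs, hfs⟩ := hivt hqmem
    have hs0 : (0:ℝ) ≤ s := le_trans hp0 hs.1
    have hsx : s < xbar := by
      rcases lt_or_eq_of_le hs.2 with h1 | h1
      · exact h1
      · exfalso; rw [h1, hfix] at hfs; rw [← hfs] at hqx; linarith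
    have hglt := glt s hs0 hsx
    rw [hfs, hfq] at hglt
    have := hs.1
    linarith
  -- liminf ≥ xbar
  have hlge : xbar ≤ l := by
    by_contra h
    push_neg at h
    obtain ⟨φ', hφ', hφt'⟩ := subseq_tendsto_liminf haC ha0
    obtain ⟨q, hq0, hfq, hlq, hqL⟩ := pred l ⟨φ', hφ', hφt'⟩
    have hqx : xbar < q := by
      rcases lt_trichotomy q xbar with h1 | h1 | h1
      · exfalso; have := hinc q hq0 h1; rw [hfq] at this; linarith
      · exfalso; rw [h1, hfix] at hfq; linarith
      · exact h1
    linarith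
  have hLx : L = xbar := le_antisymm hLle (le_trans hlge hlL)
  have hlx : l = xbar := le_antisymm (le_trans hlL (le_of_eq hLx)) hlge
  exact tendsto_of_liminf_eq_limsup hlx hLx hbU hbL
end

section
/- Let a > 1 and b = (a-1)/2, and let F₀(x,y) = a²x/((1+bx)(1+b(x+y)) + abx). The partial derivatives at (1,1) satisfy |∂F₀/∂x(1,1)| + |∂F₀/∂y(1,1)| = (|a² - 4a - 1| + a² - 1)/(4a²) < 1 for all a > 1. -/
/-- For `a > 1`, `b = (a-1)/2`, the SLAS condition holds for
`F₀(x,y) = a²x/((1+bx)(1+b(x+y)) + abx)`: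
`|∂F₀/∂x(1,1)| + |∂F₀/∂y(1,1)| = (|a²-4a-1| + a² - 1)/(4a²) < 1`. -/
theorem stmt_10 (a : ℝ) (ha : 1 < a)
    (F₀ : ℝ → ℝ → ℝ)
    (hF : F₀ = fun x y => a^2 * x / ((1 + ((a-1)/2) * x) * (1 + ((a-1)/2) * (x + y)) + a * ((a-1)/2) * x)) :
    |deriv (fun x => F₀ x 1) 1| + |deriv (fun y => F₀ 1 y) 1|
        = (|a^2 - 4*a - 1| + a^2 - 1) / (4 * a^2) ∧
      (|a^2 - 4*a - 1| + a^2 - 1) / (4 * a^2) < 1 := by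
  subst hF
  have ha0 : (0 : ℝ) < a := by linarith
  have ha2 : (0 : ℝ) < 4 * a^2 := by positivity
  set c : ℝ := (a - 1) / 2 with hc
  have hden1 : (1 + c * 1) * (1 + c * (1 + 1)) + a * c * 1 = a^2 := by
    rw [hc]; ring
  have hdenne : (1 + c * 1) * (1 + c * (1 + 1)) + a * c * 1 ≠ 0 := by
    rw [hden1]; positivity
  -- derivative in x
  have hx : HasDerivAt (fun x : ℝ => a^2 * x / ((1 + c * x) * (1 + c * (x + 1)) + a * c * x))
      ((-a^2 + 4*a + 1) / (4 * a^2)) 1 := by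
    have hnum : HasDerivAt (fun x : ℝ => a^2 * x) (a^2) 1 := by
      simpa using (hasDerivAt_id (1:ℝ)).const_mul (a^2)
    have h1 : HasDerivAt (fun x : ℝ => 1 + c * x) c 1 := by
      simpa using ((hasDerivAt_id (1:ℝ)).const_mul c).const_add 1
    have h2 : HasDerivAt (fun x : ℝ => 1 + c * (x + 1)) c 1 := by
      simpa using (((hasDerivAt_id (1:ℝ)).add_const 1).const_mul c).const_add 1
    have h3 : HasDerivAt (fun x : ℝ => a * c * x) (a * c) 1 := by
      simpa using (hasDerivAt_id (1:ℝ)).const_mul (a * c)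
    have hden : HasDerivAt (fun x : ℝ => (1 + c * x) * (1 + c * (x + 1)) + a * c * x)
        (c * (1 + c * (1 + 1)) + (1 + c * 1) * c + a * c) 1 := (h1.mul h2).add h3
    have hne : (1 + c * 1) * (1 + c * (1 + 1)) + a * c * 1 ≠ 0 := hdenne
    have := hnum.div hden hne
    refine HasDerivAt.congr_deriv this ?_
    rw [hden1, hc]
    field_simp
    ring
  -- derivative in y
  have hy : HasDerivAt (fun y : ℝ => a^2 * 1 / ((1 + c * 1) * (1 + c * (1 + y)) + a * c * 1))
      (-((a^2 - 1) / (4 * a^2))) 1 := by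
    have hnum : HasDerivAt (fun _ : ℝ => a^2 * 1) 0 1 := hasDerivAt_const _ _
    have h2 : HasDerivAt (fun y : ℝ => 1 + c * (1 + y)) c 1 := by
      simpa using (((hasDerivAt_id (1:ℝ)).const_add 1).const_mul c).const_add 1
    have hden : HasDerivAt (fun y : ℝ => (1 + c * 1) * (1 + c * (1 + y)) + a * c * 1)
        ((1 + c * 1) * c) 1 := by
      simpa using ((h2.const_mul (1 + c * 1)).add_const (a * c * 1))
    have hne : (1 + c * 1) * (1 + c * (1 + 1)) + a * c * 1 ≠ 0 := hdenne
    have := hnum.div hden hne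
    refine HasDerivAt.congr_deriv this ?_
    rw [hden1, hc]
    field_simp
    ring
  have hdx : deriv (fun x : ℝ => a^2 * x / ((1 + c * x) * (1 + c * (x + 1)) + a * c * x)) 1
      = (-a^2 + 4*a + 1) / (4 * a^2) := hx.deriv
  have hdy : deriv (fun y : ℝ => a^2 * 1 / ((1 + c * 1) * (1 + c * (1 + y)) + a * c * 1)) 1
      = -((a^2 - 1) / (4 * a^2)) := hy.deriv
  constructor
  · have e1 : (fun x : ℝ => a ^ 2 * x / ((1 + c * x) * (1 + c * (x + 1)) + a * c * x))
        = fun x : ℝ => a ^ 2 * x / ((1 + c * x) * (1 + c * (x + 1)) + a * c * x) := rfl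
    simp only
    rw [hdx, hdy]
    rw [abs_neg, abs_div, abs_div, abs_of_pos ha2, abs_of_pos (by nlinarith : (0:ℝ) < a^2 - 1)]
    rw [show |-a^2 + 4*a + 1| = |a^2 - 4*a - 1| by rw [← abs_neg]; ring_nf]
    field_simp
    ring
  · rcases abs_cases (a^2 - 4*a - 1) with ⟨h, _⟩ | ⟨h, _⟩ <;> rw [h] <;>
      rw [div_lt_one ha2] <;> nlinarith
end
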